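/- arXiv:2406.07569 — 2 statements merged into one kernel-verified Lean document; each statement's English description precedes it below -/
import Mathlib

section
/- Let A be a commutative K-algebra, Ξ a nonempty subset of Der_K(A), and R the K-subalgebra of End_K(A) generated by the multiplication operators by elements of A together with the elements of Ξ. Then R is a simple ring if and only if A is Ξ-simple, i.e. the only ideals 𝔞 of A with δ(𝔞) ⊆ 𝔞 for all δ ∈ Ξ are 0 and A. -/
section Aux

variable {K A : Type*} [Field K] [CommRing A] [Algebra K A]

/-- commutator with a multiplication operator -/
noncomputable def DD (a : A) (f : Module.End K A) : Module.End K A :=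
  f * Algebra.lmul K A a - Algebra.lmul K A a * f

lemma lmul_app (a x : A) : (Algebra.lmul K A a) x = a * x := rfl

/-- `QQ n f` : `f` has "order < n" w.r.t. commutators with multiplications. -/
def QQ : ℕ → Module.End K A → Prop
  | 0, f => f = 0
  | n+1, f => ∀ a : A, QQ n (DD a f)

lemma QQ_zero : ∀ n : ℕ, QQ (K := K) (A := A) n 0
  | 0 => rfl
  | n+1 => fun a => by
      have : DD (K := K) a (0 : Module.End K A) = 0 := by simp [DD]
      rw [this]; exact QQ_zero n

lemma QQ_mono : ∀ (n : ℕ) (f : Module.End K A), QQ n f → QQ (n+1) f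
  | 0, f, h => fun a => show (DD a f = 0) by
      have : f = 0 := h
      simp [DD, this]
  | n+1, f, h => fun a => QQ_mono n _ (h a)

lemma QQ_le {n m : ℕ} (h : n ≤ m) {f : Module.End K A} (hf : QQ n f) : QQ m f := by
  induction m with
  | zero => exact (Nat.le_zero.mp h) ▸ hf
  | succ m ih =>
    rcases Nat.lt_or_ge n (m+1) with h' | h'
    · exact QQ_mono m f (ih (Nat.lt_succ_iff.mp h'))
    · exact (Nat.le_antisymm h h') ▸ hf

lemma DD_add (a : A) (f g : Module.End K A) :
    DD (K := K) a (f + g) = DD a f + DD a g := by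
  simp only [DD]; noncomm_ring

lemma DD_mul (a : A) (f g : Module.End K A) :
    DD (K := K) a (f * g) = DD a f * g + f * DD a g := by
  simp only [DD, mul_sub, sub_mul, mul_assoc]; abel

lemma QQ_add : ∀ (n : ℕ) (f g : Module.End K A), QQ n f → QQ n g → QQ n (f + g)
  | 0, f, g, hf, hg => by
      have hf' : f = 0 := hf
      have hg' : g = 0 := hg
      show f + g = 0
      rw [hf', hg', add_zero]
  | n+1, f, g, hf, hg => fun a => by
      rw [DD_add]; exact QQ_add n _ _ (hf a) (hg a)

lemma QQ_mul : ∀ (k n m : ℕ) (f g : Module.End K A), n + m ≤ k →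
    QQ n f → QQ m g → QQ (n + m) (f * g)
  | k, 0, m, f, g, _, hf, hg => by
      have hf' : f = 0 := hf
      rw [hf', zero_mul]; exact QQ_zero _
  | k, n+1, 0, f, g, _, hf, hg => by
      have hg' : g = 0 := hg
      rw [hg', mul_zero]; exact QQ_zero _
  | k+1, n+1, m+1, f, g, hk, hf, hg => by
      intro a
      show QQ (n+1+m) (DD a (f * g))
      rw [DD_mul]
      have h1 : QQ (n+m+1) (DD a f * g) := by
        have := QQ_mul k n (m+1) _ _ (by omega) (hf a) hg
        rwa [show n+(m+1) = n+m+1 by omega] at this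
      have h2 : QQ (n+m+1) (f * DD a g) := by
        have := QQ_mul k (n+1) m _ _ (by omega) hf (hg a)
        rwa [show (n+1)+m = n+m+1 by omega] at this
      exact QQ_le (by omega) (QQ_add _ _ _ h1 h2)

lemma QQ_lmul (a : A) : QQ (K := K) 1 (Algebra.lmul K A a) := by
  intro b
  show DD b (Algebra.lmul K A a) = 0
  simp only [DD]
  rw [← map_mul, ← map_mul, mul_comm, sub_self]

lemma lmul_injective {a : A} (h : Algebra.lmul K A a = 0) : a = 0 := by
  have := LinearMap.congr_fun h 1
  simpa [lmul_app] using this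

end Aux

set_option maxHeartbeats 2000000 in
/-- Let `A` be a commutative `K`-algebra, `Ξ` a nonempty set of `K`-linear derivations of
`A` and `R` the subalgebra of `End_K(A)` generated by the multiplication operators by
elements of `A` together with `Ξ`.  Then `R` is a simple ring iff `A` is `Ξ`-simple
(the only `Ξ`-stable ideals of `A` are `0` and `A`). -/
theorem derivation_ring_simple_iff_Xi_simple
    {K A : Type*} [Field K] [CommRing A] [Algebra K A] [Nontrivial A]
    (Ξ : Set (Module.End K A)) (hne : Ξ.Nonempty)
    (hder : ∀ δ ∈ Ξ, ∀ x y : A, δ (x * y) = δ x * y + x * δ y)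
    (R : Subalgebra K (Module.End K A))
    (hR : R = Algebra.adjoin K (Set.range ⇑(Algebra.lmul K A) ∪ Ξ)) :
    IsSimpleRing R ↔
      ∀ 𝔞 : Ideal A, (∀ δ ∈ Ξ, ∀ a ∈ 𝔞, δ a ∈ 𝔞) → 𝔞 = ⊥ ∨ 𝔞 = ⊤ := by
  subst hR
  set S := Set.range ⇑(Algebra.lmul K A) ∪ Ξ with hS
  set R := Algebra.adjoin K S with hR
  haveI : Nontrivial R := ⟨1, 0, fun h => by
    have h' : (1 : Module.End K A) = 0 := congrArg Subtype.val h
    have := LinearMap.congr_fun h' 1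
    simp at this⟩
  -- commutator of δ with lmul a is lmul (δ a)
  have hcomm : ∀ δ ∈ Ξ, ∀ a : A, DD a δ = Algebra.lmul K A (δ a) := by
    intro δ hδ a
    ext x
    simp only [DD, LinearMap.sub_apply, Module.End.mul_apply, lmul_app]
    rw [hder δ hδ a x]
    ring
  have hlmulR : ∀ a : A, Algebra.lmul K A a ∈ R :=
    fun a => Algebra.subset_adjoin (Or.inl ⟨a, rfl⟩)
  constructor
  · -- simple ⇒ Ξ-simple
    rintro ⟨hsimple⟩ 𝔞 hstab
    by_contra hcon
    push_neg at hcon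
    obtain ⟨hbot, htop⟩ := hcon
    -- every element of R preserves 𝔞
    have hpres : ∀ f : Module.End K A, f ∈ R → ∀ x ∈ 𝔞, f x ∈ 𝔞 := by
      intro f hf
      induction hf using Algebra.adjoin_induction with
      | mem g hg =>
        rcases hg with ⟨a, rfl⟩ | hg
        · intro x hx; rw [lmul_app]; exact Ideal.mul_mem_left 𝔞 a hx
        · exact hstab g hg
      | algebraMap r =>
        intro x hx
        simpa [Module.algebraMap_end_apply, Algebra.smul_def] using
          Ideal.mul_mem_left 𝔞 _ hx
      | add g h _ _ ihg ihh =>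
        intro x hx
        rw [LinearMap.add_apply]
        exact 𝔞.add_mem (ihg x hx) (ihh x hx)
      | mul g h _ _ ihg ihh =>
        intro x hx; exact ihg _ (ihh x hx)
    -- the two-sided ideal of operators with range in 𝔞
    let I : TwoSidedIdeal R := TwoSidedIdeal.mk'
      {f : R | ∀ x : A, (f : Module.End K A) x ∈ 𝔞}
      (fun x => by simp)
      (fun {f g} hf hg x => by
        push_cast
        rw [LinearMap.add_apply]
        exact 𝔞.add_mem (hf x) (hg x))
      (fun {f} hf x => by
        push_cast
        rw [LinearMap.neg_apply]
        exact 𝔞.neg_mem (hf x))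
      (fun {f g} hg x => by
        show (f : Module.End K A) ((g : Module.End K A) x) ∈ 𝔞
        exact hpres _ f.2 _ (hg x))
      (fun {f g} hf x => by
        show (f : Module.End K A) ((g : Module.End K A) x) ∈ 𝔞
        exact hf _)
    obtain ⟨a, ha, hane⟩ := Submodule.exists_mem_ne_zero_of_ne_bot hbot
    have hIne : I ≠ ⊥ := by
      intro h
      have hmem : (⟨Algebra.lmul K A a, hlmulR a⟩ : R) ∈ I := by
        rw [TwoSidedIdeal.mem_mk']
        intro x
        rw [lmul_app]
        exact Ideal.mul_mem_right x 𝔞 ha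
      rw [h, TwoSidedIdeal.mem_bot] at hmem
      apply hane
      have : Algebra.lmul K A a = 0 := congrArg Subtype.val hmem
      exact lmul_injective this
    have hItop : I = ⊤ := (hsimple.eq_bot_or_eq_top I).resolve_left hIne
    have h1 : (1 : R) ∈ I := by rw [hItop]; trivial
    rw [TwoSidedIdeal.mem_mk'] at h1
    have h1' := h1 1
    rw [OneMemClass.coe_one, Module.End.one_apply] at h1'
    exact htop ((Ideal.eq_top_iff_one 𝔞).mpr h1')
  · -- Ξ-simple ⇒ simple
    intro hXi
    refine ⟨⟨fun I => ?_⟩⟩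
    rcases eq_or_ne I ⊥ with h | h
    · exact Or.inl h
    right
    -- I ≠ ⊥ : get a nonzero element
    obtain ⟨f, hfI, hf0⟩ : ∃ f : R, f ∈ I ∧ f ≠ 0 := by
      by_contra hcon
      push_neg at hcon
      refine h (eq_bot_iff.mpr fun x hx => ?_)
      rw [TwoSidedIdeal.mem_bot]
      exact hcon x hx
    -- commutators stay in I
    have hDD : ∀ (a : A) (g : R), g ∈ I →
        ∃ g' : R, g' ∈ I ∧ (g' : Module.End K A) = DD a (g : Module.End K A) := by
      intro a g hg
      refine ⟨g * ⟨Algebra.lmul K A a, hlmulR a⟩ - ⟨Algebra.lmul K A a, hlmulR a⟩ * g,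
        TwoSidedIdeal.sub_mem _ (TwoSidedIdeal.mul_mem_right _ _ _ hg)
          (TwoSidedIdeal.mul_mem_left _ _ _ hg), by push_cast; rfl⟩
    -- extraction: from a nonzero element of I of finite order, get a nonzero
    -- element commuting with all multiplications
    have extract : ∀ (n : ℕ) (g : R), g ∈ I → (g : Module.End K A) ≠ 0 →
        QQ n (g : Module.End K A) →
        ∃ g' : R, g' ∈ I ∧ (g' : Module.End K A) ≠ 0 ∧
          ∀ a : A, DD a (g' : Module.End K A) = 0 := by
      intro n
      induction n with
      | zero => intro g _ hg0 hq; exact absurd hq hg0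
      | succ n ih =>
        intro g hgI hg0 hq
        by_cases hall : ∀ a : A, DD a (g : Module.End K A) = 0
        · exact ⟨g, hgI, hg0, hall⟩
        · push_neg at hall
          obtain ⟨a, ha⟩ := hall
          obtain ⟨g', hg'I, hg'eq⟩ := hDD a g hgI
          exact ih g' hg'I (hg'eq ▸ ha) (hg'eq ▸ hq a)
    -- every element of R has finite order
    have hord : ∀ f : Module.End K A, f ∈ R → ∃ n, QQ n f := by
      intro f hf
      induction hf using Algebra.adjoin_induction with
      | mem g hg =>
        rcases hg with ⟨a, rfl⟩ | hg
        · exact ⟨1, QQ_lmul a⟩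
        · refine ⟨2, fun a => ?_⟩
          rw [hcomm g hg a]
          exact QQ_lmul _
      | algebraMap r =>
        refine ⟨1, ?_⟩
        have : algebraMap K (Module.End K A) r = Algebra.lmul K A (algebraMap K A r) := by
          ext x
          rw [lmul_app, Module.algebraMap_end_apply, Algebra.smul_def]
        rw [this]
        exact QQ_lmul _
      | add g h _ _ ihg ihh =>
        obtain ⟨n, hn⟩ := ihg
        obtain ⟨m, hm⟩ := ihh
        exact ⟨max n m, QQ_add _ _ _ (QQ_le (le_max_left n m) hn)
          (QQ_le (le_max_right n m) hm)⟩
      | mul g h _ _ ihg ihh =>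
        obtain ⟨n, hn⟩ := ihg
        obtain ⟨m, hm⟩ := ihh
        exact ⟨n + m, QQ_mul (n+m) n m _ _ le_rfl hn hm⟩
    obtain ⟨n, hn⟩ := hord (f : Module.End K A) f.2
    have hf0' : (f : Module.End K A) ≠ 0 := fun h' => hf0 (Subtype.ext h')
    obtain ⟨g, hgI, hg0, hgcomm⟩ := extract n f hfI hf0' hn
    -- g commutes with multiplications ⇒ g = lmul (g 1)
    have hg_lmul : (g : Module.End K A) = Algebra.lmul K A ((g : Module.End K A) 1) := by
      ext x
      have h0 := LinearMap.congr_fun (hgcomm x) 1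
      simp only [DD, LinearMap.sub_apply, Module.End.mul_apply, lmul_app,
        LinearMap.zero_apply, mul_one] at h0
      rw [lmul_app, mul_comm]
      exact (sub_eq_zero.mp h0)
    -- the Ξ-stable ideal {c | lmul c ∈ I}
    let 𝔞 : Ideal A :=
      { carrier := {c : A | ∃ g' : R, g' ∈ I ∧ (g' : Module.End K A) = Algebra.lmul K A c}
        add_mem' := by
          rintro x y ⟨gx, hgx, hgx'⟩ ⟨gy, hgy, hgy'⟩
          exact ⟨gx + gy, TwoSidedIdeal.add_mem _ hgx hgy, by
            push_cast; rw [hgx', hgy', ← map_add]⟩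
        zero_mem' := ⟨0, TwoSidedIdeal.zero_mem _, by simp⟩
        smul_mem' := by
          rintro c x ⟨gx, hgx, hgx'⟩
          refine ⟨⟨Algebra.lmul K A c, hlmulR c⟩ * gx,
            TwoSidedIdeal.mul_mem_left _ _ _ hgx, ?_⟩
          push_cast
          rw [hgx', ← map_mul]
          rfl }
    have hstab : ∀ δ ∈ Ξ, ∀ c ∈ 𝔞, δ c ∈ 𝔞 := by
      rintro δ hδ c ⟨gc, hgc, hgc'⟩
      have hδR : δ ∈ R := Algebra.subset_adjoin (Or.inr hδ)
      refine ⟨⟨δ, hδR⟩ * gc - gc * ⟨δ, hδR⟩,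
        TwoSidedIdeal.sub_mem _ (TwoSidedIdeal.mul_mem_left _ _ _ hgc)
          (TwoSidedIdeal.mul_mem_right _ _ _ hgc), ?_⟩
      push_cast
      rw [hgc']
      have hc := hcomm δ hδ c
      simp only [DD] at hc
      rw [← hc]
    have h1 : (g : Module.End K A) 1 ∈ 𝔞 := ⟨g, hgI, hg_lmul⟩
    have h𝔞 : 𝔞 = ⊤ := by
      refine (hXi 𝔞 hstab).resolve_left fun hb => ?_
      rw [hb] at h1
      apply hg0
      rw [hg_lmul, Ideal.mem_bot.mp h1, map_zero]
    have h1' : (1 : A) ∈ 𝔞 := h𝔞 ▸ trivial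
    obtain ⟨g1, hg1, hg1'⟩ := h1'
    have hg1'' : g1 = 1 := by
      apply Subtype.ext
      rw [hg1']
      ext x
      rw [lmul_app, one_mul, OneMemClass.coe_one, Module.End.one_apply]
    rw [hg1''] at hg1
    exact TwoSidedIdeal.eq_top _ hg1
end

section
/- Let A be a finitely generated commutative K-algebra with a finite generating family (x_λ)_{λ∈Λ}. For δ ∈ D(A)_i and any multi-index α = (α_λ) ∈ ℕ^Λ, one has δ(x^α) = Σ_{β ≤ α, |β| ≤ i} (-1)^{|β|} (∏_λ C(α_λ, β_λ)) · (ad^β(δ))(1) · x^{α-β}, where x^γ := ∏_λ x_λ^{γ_λ}, |β| := Σ_λ β_λ, C(·,·) are binomial coefficients, and ad^β := ∏_λ ad_{x_λ}^{β_λ} (the inner derivations ad_{x_λ} : u ↦ x_λu - ux_λ of End_K(A) commute pairwise, so this product is well defined). Consequently, every δ ∈ D(A)_i is uniquely determined by the family of elements (ad^β(δ))(1) ∈ A for β ∈ ℕ^Λ with |β| ≤ i: if δ, δ' ∈ D(A)_i satisfy (ad^β(δ))(1) = (ad^β(δ'))(1) for all such β, then δ = δ'. -/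
/-- `DO K A i` is the set of differential operators on `A` of order `≤ i`. -/
def DO (K A : Type*) [CommSemiring K] [CommRing A] [Algebra K A] :
    ℕ → Set (Module.End K A)
  | 0 => {u | ∀ r : A, Algebra.lmul K A r * u = u * Algebra.lmul K A r}
  | i + 1 => {u | ∀ r : A, Algebra.lmul K A r * u - u * Algebra.lmul K A r ∈ DO K A i}

/-- `adPow x β δ = ad^β(δ) = (∏_λ ad_{x_λ}^{β_λ})(δ)` where `ad_{x_λ}(u) = x_λ u - u x_λ`
is the inner derivation of `End_K(A)` determined by (multiplication by) `x_λ`.  The inner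
derivations `ad_{x_λ}` commute pairwise, so the order of the product is irrelevant. -/
def adPow {K A : Type*} [CommSemiring K] [CommRing A] [Algebra K A] {N : ℕ}
    (x : Fin N → A) (β : Fin N → ℕ) (δ : Module.End K A) : Module.End K A :=
  (List.finRange N).foldr
    (fun l u =>
      (fun v => Algebra.lmul K A (x l) * v - v * Algebra.lmul K A (x l))^[β l] u) δ

section Aux

variable {K A : Type*} [CommSemiring K] [CommRing A] [Algebra K A]

private lemma neg_pow_apply' {M : Type*} [AddCommGroup M] [Module K M]
    (f : Module.End K M) (k : ℕ) (u : M) :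
    ((-f) ^ k) u = ((-1 : ℤ) ^ k) • ((f ^ k) u) := by
  induction k generalizing u with
  | zero => simp
  | succ k ih =>
    rw [pow_succ (-f), Module.End.mul_apply, LinearMap.neg_apply, map_neg, ih, pow_succ f,
      Module.End.mul_apply, pow_succ (-1 : ℤ), mul_neg_one, neg_smul]

/-- The single-variable binomial identity `u M^n = Σ_k (-1)^k C(n,k) M^{n-k} ad_M^k(u)`. -/
private lemma key_binom (M : Module.End K A) (n : ℕ) (u : Module.End K A) :
    u * M ^ n
      = ∑ k ∈ Finset.range (n + 1), ((-1 : ℤ) ^ k * ((n.choose k : ℤ))) •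
          (M ^ (n - k) * (fun v => M * v - v * M)^[k] u) := by
  have hψ : ⇑(LinearMap.mulLeft K M - LinearMap.mulRight K M) = fun v => M * v - v * M := by
    funext v; simp
  have hc : Commute (LinearMap.mulLeft K M)
      (-(LinearMap.mulLeft K M - LinearMap.mulRight K M)) := by
    unfold Commute SemiconjBy
    ext v
    simp [Module.End.mul_apply, mul_sub, sub_mul, mul_assoc]
  have h1 : u * M ^ n
      = ((LinearMap.mulLeft K M + -(LinearMap.mulLeft K M - LinearMap.mulRight K M)) ^ n) u := by
    have h2 : LinearMap.mulLeft K M + -(LinearMap.mulLeft K M - LinearMap.mulRight K M)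
        = LinearMap.mulRight K M := by abel
    rw [h2, LinearMap.pow_mulRight, LinearMap.mulRight_apply]
  rw [h1, hc.add_pow, LinearMap.sum_apply, ← Finset.sum_range_reflect]
  apply Finset.sum_congr rfl
  intro k hk
  have hk' : k ≤ n := Nat.lt_succ_iff.mp (Finset.mem_range.mp hk)
  have e1 : n + 1 - 1 - k = n - k := by omega
  rw [e1, Nat.sub_sub_self hk', Nat.choose_symm hk']
  rw [Module.End.mul_apply, Module.End.mul_apply, Module.End.natCast_apply, map_nsmul,
    neg_pow_apply', map_nsmul, map_zsmul, LinearMap.pow_mulLeft, LinearMap.mulLeft_apply,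
    Module.End.pow_apply, hψ]
  rw [← Nat.cast_smul_eq_nsmul ℤ, smul_smul, mul_comm]

/-- `ad M u = [M, u]` for `M, u : End K A`. -/
private def adE (M : Module.End K A) : Module.End K A → Module.End K A :=
  fun v => M * v - v * M

private lemma zero_mem_DO (i : ℕ) : (0 : Module.End K A) ∈ DO K A i := by
  induction i with
  | zero =>
    simp only [DO, Set.mem_setOf_eq]
    intro r; simp
  | succ i ih =>
    simp only [DO, Set.mem_setOf_eq]
    intro r; simpa using ih

private lemma ad_mem_DO {u : Module.End K A} {i : ℕ} (h : u ∈ DO K A i) (r : A) :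
    adE (Algebra.lmul K A r) u ∈ DO K A (i - 1) := by
  cases i with
  | zero =>
    have h0 : adE (Algebra.lmul K A r) u = 0 := sub_eq_zero.mpr (h r)
    rw [h0]; exact zero_mem_DO 0
  | succ i => exact h r

private lemma ad_DO_zero {u : Module.End K A} (h : u ∈ DO K A 0) (r : A) :
    adE (Algebra.lmul K A r) u = 0 := sub_eq_zero.mpr (h r)

private lemma iter_ad_DO {u : Module.End K A} {m : ℕ} (h : u ∈ DO K A m) (r : A) (k : ℕ) :
    (adE (Algebra.lmul K A r))^[k] u ∈ DO K A (m - k) ∧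
      (m < k → (adE (Algebra.lmul K A r))^[k] u = 0) := by
  induction k with
  | zero => exact ⟨h, fun hm => absurd hm (by omega)⟩
  | succ k ih =>
    rw [Function.iterate_succ_apply']
    constructor
    · have := ad_mem_DO ih.1 r
      rwa [Nat.sub_sub] at this
    · intro hmk
      by_cases hk : m < k
      · rw [ih.2 hk]
        show Algebra.lmul K A r * 0 - 0 * Algebra.lmul K A r = 0
        simp
      · have hmk' : m - k = 0 := by omega
        have h0 : (adE (Algebra.lmul K A r))^[k] u ∈ DO K A 0 := by
          have := ih.1; rwa [hmk'] at this
        exact ad_DO_zero h0 r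

private lemma foldr_ad_DO {N : ℕ} (x : Fin N → A) (β : Fin N → ℕ) :
    ∀ (ls : List (Fin N)) (u : Module.End K A) (j : ℕ), u ∈ DO K A j →
      (ls.foldr (fun l v => (adE (Algebra.lmul K A (x l)))^[β l] v) u
          ∈ DO K A (j - (ls.map β).sum)) ∧
        (j < (ls.map β).sum →
          ls.foldr (fun l v => (adE (Algebra.lmul K A (x l)))^[β l] v) u = 0) := by
  intro ls
  induction ls with
  | nil =>
    intro u j h
    exact ⟨by simpa using h, fun hj => absurd hj (by simp)⟩
  | cons l ls ih =>
    intro u j h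
    obtain ⟨h1, h2⟩ := ih u j h
    simp only [List.foldr_cons, List.map_cons, List.sum_cons]
    constructor
    · have := (iter_ad_DO h1 (x l) (β l)).1
      rwa [Nat.sub_sub, Nat.add_comm] at this
    · intro hj
      by_cases hr : j < (ls.map β).sum
      · rw [h2 hr]
        exact Function.iterate_fixed (by show _ - _ = _; simp) _
      · exact (iter_ad_DO h1 (x l) (β l)).2 (by omega)

private lemma adPow_eq_zero {N : ℕ} (x : Fin N → A) (β : Fin N → ℕ) {i : ℕ}
    {δ : Module.End K A} (hδ : δ ∈ DO K A i) (h : i < ∑ l, β l) :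
    adPow x β δ = 0 := by
  have hfold := (foldr_ad_DO x β (List.finRange N) δ i hδ).2
  have hsum : ((List.finRange N).map β).sum = ∑ l, β l := (Fin.sum_univ_def β).symm
  show (List.finRange N).foldr (fun l v => (adE (Algebra.lmul K A (x l)))^[β l] v) δ = 0
  exact hfold (by omega)

private lemma Iic_nat_eq_range (n : ℕ) : Finset.Iic n = Finset.range (n + 1) := by
  ext m; simp [Nat.lt_succ_iff]

private lemma sum_Iic_succ {M : Type*} [AddCommMonoid M] {N : ℕ} (α : Fin (N + 1) → ℕ)
    (f : (Fin (N + 1) → ℕ) → M) :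
    ∑ β ∈ Finset.Iic α, f β
      = ∑ b ∈ Finset.Iic (α 0), ∑ β' ∈ Finset.Iic (fun l => α l.succ),
          f (Fin.cons b β') := by
  rw [← Finset.sum_product']
  apply Finset.sum_nbij' (i := fun β => (β 0, fun l => β l.succ))
    (j := fun p => Fin.cons p.1 p.2)
  · intro β hβ
    rw [Finset.mem_Iic] at hβ
    rw [Finset.mem_product, Finset.mem_Iic, Finset.mem_Iic]
    exact ⟨hβ 0, fun l => hβ l.succ⟩
  · intro p hp
    rw [Finset.mem_product, Finset.mem_Iic, Finset.mem_Iic] at hp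
    rw [Finset.mem_Iic]
    intro l
    refine Fin.cases ?_ ?_ l
    · simpa using hp.1
    · intro m; simpa using hp.2 m
  · intro β hβ
    exact Fin.cons_self_tail β
  · intro p hp
    refine Prod.ext ?_ ?_
    · simp
    · funext l; simp
  · intro β hβ
    exact congrArg f (Fin.cons_self_tail β).symm

private lemma adPow_cons {N : ℕ} (x : Fin (N + 1) → A) (b : ℕ) (β' : Fin N → ℕ)
    (δ : Module.End K A) :
    adPow x (Fin.cons b β') δ
      = (fun v => Algebra.lmul K A (x 0) * v - v * Algebra.lmul K A (x 0))^[b]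
          (adPow (fun l => x l.succ) β' δ) := by
  show (List.finRange (N + 1)).foldr _ δ = _
  rw [List.finRange_succ, List.foldr_cons, List.foldr_map]
  simp only [Fin.cons_zero, Fin.cons_succ]
  rfl

/-- The operator form of the canonical-form identity. -/
private lemma opform {N : ℕ} : ∀ (x : Fin N → A) (α : Fin N → ℕ) (δ : Module.End K A),
    δ * Algebra.lmul K A (∏ l, x l ^ α l)
      = ∑ β ∈ Finset.Iic α,
          ((-1 : ℤ) ^ (∑ l, β l) * ∏ l, ((α l).choose (β l) : ℤ)) •
            (Algebra.lmul K A (∏ l, x l ^ (α l - β l)) * adPow x β δ) := by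
  induction N with
  | zero =>
    intro x α δ
    have hα : ∀ β : Fin 0 → ℕ, β = α := fun β => funext fun l => l.elim0
    have hIic : Finset.Iic α = {α} := by
      ext β
      simp only [Finset.mem_Iic, Finset.mem_singleton]
      exact ⟨fun _ => hα β, fun h => le_of_eq h⟩
    have e : ∀ e : Fin 0 → ℕ, (∏ l, x l ^ e l) = (1 : A) := fun _ => by simp
    have hs : ((-1 : ℤ) ^ (∑ l : Fin 0, α l) * ∏ l : Fin 0, ((α l).choose (α l) : ℤ))
        = 1 := by simp
    rw [hIic, Finset.sum_singleton, e, e, map_one, mul_one, one_mul, hs, one_smul]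
    simp [adPow]
  | succ N ih =>
    intro x α δ
    rw [sum_Iic_succ]
    simp only [Fin.sum_univ_succ, Fin.prod_univ_succ, Fin.cons_zero, Fin.cons_succ,
      adPow_cons]
    rw [mul_comm (x 0 ^ α 0), map_mul, ← mul_assoc, ih, Finset.sum_mul, Finset.sum_comm]
    apply Finset.sum_congr rfl
    intro β' hβ'
    rw [smul_mul_assoc, mul_assoc, map_pow, key_binom, Finset.mul_sum, Finset.smul_sum,
      Iic_nat_eq_range]
    apply Finset.sum_congr rfl
    intro b hb
    rw [mul_smul_comm, smul_smul, map_mul (Algebra.lmul K A), map_pow]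
    congr 1
    · ring
    · rw [← mul_assoc]
      congr 1
      rw [← map_pow, ← map_mul, ← map_mul, mul_comm]

/-- The canonical-form formula for a single differential operator. -/
private lemma formula {N : ℕ} (x : Fin N → A) (i : ℕ) (δ : Module.End K A)
    (hδ : δ ∈ DO K A i) (α : Fin N → ℕ) :
    δ (∏ l, x l ^ α l) =
      ∑ β ∈ (Finset.Iic α).filter (fun β => ∑ l, β l ≤ i),
        ((-1 : ℤ) ^ (∑ l, β l) * ∏ l, ((α l).choose (β l) : ℤ)) •
          (adPow x β δ 1 * ∏ l, x l ^ (α l - β l)) := by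
  have h0 : δ (∏ l, x l ^ α l) = (δ * Algebra.lmul K A (∏ l, x l ^ α l)) 1 := by
    rw [Module.End.mul_apply]
    congr 1
    simp
  rw [h0, opform, LinearMap.sum_apply]
  have hterm : ∀ β ∈ Finset.Iic α,
      (((-1 : ℤ) ^ (∑ l, β l) * ∏ l, ((α l).choose (β l) : ℤ)) •
          (Algebra.lmul K A (∏ l, x l ^ (α l - β l)) * adPow x β δ)) 1
        = ((-1 : ℤ) ^ (∑ l, β l) * ∏ l, ((α l).choose (β l) : ℤ)) •
            (adPow x β δ 1 * ∏ l, x l ^ (α l - β l)) := by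
    intro β _
    rw [LinearMap.smul_apply, Module.End.mul_apply]
    congr 1
    rw [mul_comm]
    simp
  rw [Finset.sum_congr rfl hterm]
  refine (Finset.sum_filter_of_ne ?_).symm
  intro β hβ hne
  by_contra hgt
  apply hne
  rw [adPow_eq_zero x β hδ (by omega)]
  simp

private lemma closure_monomial {N : ℕ} (x : Fin N → A) {y : A}
    (hy : y ∈ Submonoid.closure (Set.range x)) :
    ∃ α : Fin N → ℕ, y = ∏ l, x l ^ α l := by
  induction hy using Submonoid.closure_induction with
  | mem z hz =>
    obtain ⟨l, rfl⟩ := hz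
    refine ⟨Pi.single l 1, ?_⟩
    rw [Finset.prod_eq_single l]
    · simp
    · intro m _ hm
      simp [Pi.single_eq_of_ne hm]
    · intro h
      exact absurd (Finset.mem_univ l) h
  | one => exact ⟨0, by simp⟩
  | mul a b _ _ iha ihb =>
    obtain ⟨α, rfl⟩ := iha
    obtain ⟨α', rfl⟩ := ihb
    exact ⟨α + α', by rw [← Finset.prod_mul_distrib]; simp [pow_add]⟩

end Aux

/-- The canonical form of a differential operator (Theorem 3.7 of the paper): if `A` is a
commutative `K`-algebra generated by finitely many elements `x_λ`, then every
`δ ∈ D(A)_i` satisfies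
`δ(x^α) = Σ_{β ≤ α, |β| ≤ i} (-1)^{|β|} (α choose β) (ad^β(δ))(1) · x^{α-β}`,
and `δ` is uniquely determined by the family `(ad^β(δ))(1)`, `|β| ≤ i`. -/
theorem canonical_form_of_differential_operator
    {K A : Type*} [Field K] [CommRing A] [Algebra K A]
    {N : ℕ} (x : Fin N → A) (hgen : Algebra.adjoin K (Set.range x) = ⊤)
    (i : ℕ) (δ : Module.End K A) (hδ : δ ∈ DO K A i) :
    (∀ α : Fin N → ℕ,
      δ (∏ l, x l ^ α l) =
        ∑ β ∈ (Finset.Iic α).filter (fun β => ∑ l, β l ≤ i),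
          ((-1 : ℤ) ^ (∑ l, β l) * ∏ l, (α l).choose (β l)) •
            (adPow x β δ 1 * ∏ l, x l ^ (α l - β l))) ∧
    (∀ δ' ∈ DO K A i,
      (∀ β : Fin N → ℕ, (∑ l, β l) ≤ i → adPow x β δ 1 = adPow x β δ' 1) → δ = δ') := by
  constructor
  · intro α
    simpa only [Nat.cast_prod] using formula x i δ hδ α
  · intro δ' hδ' hmatch
    have hmono : ∀ α : Fin N → ℕ, δ (∏ l, x l ^ α l) = δ' (∏ l, x l ^ α l) := by
      intro α
      rw [formula x i δ hδ α, formula x i δ' hδ' α]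
      apply Finset.sum_congr rfl
      intro β hβ
      have hle : ∑ l, β l ≤ i := (Finset.mem_filter.mp hβ).2
      rw [hmatch β hle]
    have hspan : Submodule.span K ((Submonoid.closure (Set.range x) : Submonoid A) : Set A)
        = ⊤ := by
      have h1 := Algebra.adjoin_eq_span K (Set.range x)
      rw [hgen] at h1
      rw [← h1]
      rfl
    ext a
    have ha : a ∈ Submodule.span K
        ((Submonoid.closure (Set.range x) : Submonoid A) : Set A) := by
      rw [hspan]; trivial
    induction ha using Submodule.span_induction with
    | mem z hz =>
      obtain ⟨α, rfl⟩ := closure_monomial x hz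
      exact hmono α
    | zero => simp
    | add y z _ _ ihy ihz => rw [map_add, map_add, ihy, ihz]
    | smul c y _ ihy => rw [map_smul, map_smul, ihy]
end
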